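/- Let G = (V,E,w) be a connected, locally finite weighted graph with edge weights w_e > 0, let x ∈ V be a fixed base vertex, and let u : V → ℝ be harmonic, meaning ∑_{(v,y) ∈ E} w_{vy}·(u(y) − u(v)) = 0 for every v ∈ V. Define the weighted in-degree d_in(v) = ∑_{(z,v) ∈ E, d(x,z)=d(x,v)−1} w_{zv} and weighted out-degree d_out(v) = ∑_{(v,z) ∈ E, d(x,z)=d(x,v)+1} w_{vz}. Then N(k) = ∑_{y : d(x,y)=k+1} d_in(y)·u(y)² − ∑_{y : d(x,y)=k} d_out(y)·u(y)² is non-negative and satisfies N(k+1) ≥ N(k) for every integer k ≥ 0. -/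

import Mathlib

/-- Weighted in-degree of `v` relative to base vertex `x`: the sum of the weights of
the edges joining `v` to neighbors at distance `d(x,v) − 1` from `x`. -/
noncomputable def dinw {V : Type*} (G : SimpleGraph V) (w : V → V → ℝ) (x v : V) : ℝ :=
  ∑ᶠ z ∈ {z | G.Adj v z ∧ G.dist x z = G.dist x v - 1}, w v z

/-- Weighted out-degree of `v` relative to base vertex `x`: the sum of the weights of
the edges joining `v` to neighbors at distance `d(x,v) + 1` from `x`. -/
noncomputable def doutw {V : Type*} (G : SimpleGraph V) (w : V → V → ℝ) (x v : V) : ℝ :=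
  ∑ᶠ z ∈ {z | G.Adj v z ∧ G.dist x z = G.dist x v + 1}, w v z

/-- The weighted discrete Almgren quantity `N(k)`. -/
noncomputable def almgrenNw {V : Type*} (G : SimpleGraph V) (w : V → V → ℝ) (x : V)
    (u : V → ℝ) (k : ℕ) : ℝ :=
  (∑ᶠ y ∈ {y | G.dist x y = k + 1}, dinw G w x y * u y ^ 2) -
    ∑ᶠ y ∈ {y | G.dist x y = k}, doutw G w x y * u y ^ 2

open Finset

namespace AlmgrenAux

variable {V : Type*}

lemma dist_bounds (G : SimpleGraph V) (hconn : G.Connected) (x : V) {v z : V}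
    (h : G.Adj v z) :
    G.dist x z ≤ G.dist x v + 1 ∧ G.dist x v ≤ G.dist x z + 1 := by
  have h1 : G.dist v z = 1 := SimpleGraph.dist_eq_one_iff_adj.mpr h
  have h2 : G.dist z v = 1 := SimpleGraph.dist_eq_one_iff_adj.mpr h.symm
  have t1 := hconn.dist_triangle (u := x) (v := v) (w := z)
  have t2 := hconn.dist_triangle (u := x) (v := z) (w := v)
  omega

lemma dist_base (G : SimpleGraph V) (hconn : G.Connected) (x : V) {v z : V}
    (h : G.Adj v z) (hv : G.dist x v = 0) : G.dist x z = 1 := by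
  have hxv : x = v := hconn.dist_eq_zero_iff.mp hv
  subst hxv
  exact SimpleGraph.dist_eq_one_iff_adj.mpr h

lemma sphere_finite (G : SimpleGraph V) (hconn : G.Connected)
    (hlf : ∀ v : V, (G.neighborSet v).Finite) (x : V) (k : ℕ) :
    {y : V | G.dist x y = k}.Finite := by
  induction k with
  | zero =>
    apply (Set.finite_singleton x).subset
    intro y hy
    simp only [Set.mem_setOf_eq] at hy
    exact (hconn.dist_eq_zero_iff.mp hy).symm
  | succ n ih =>
    have hsub : {y : V | G.dist x y = n + 1} ⊆
        ⋃ z ∈ {y : V | G.dist x y = n}, G.neighborSet z := by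
      intro y hy
      simp only [Set.mem_setOf_eq] at hy
      obtain ⟨p, hp⟩ := (hconn x y).exists_walk_length_eq_dist
      have hq : (p.reverse).length = n + 1 := by
        rw [SimpleGraph.Walk.length_reverse, hp, hy]
      have hnn : ¬ (p.reverse).Nil := by
        rw [SimpleGraph.Walk.not_nil_iff_lt_length, hq]; omega
      set q := p.reverse with hqdef
      have hadj : G.Adj y (q.getVert 1) := SimpleGraph.Walk.adj_snd hnn
      have htl : q.tail.length + 1 = q.length := SimpleGraph.Walk.length_tail_add_one hnn
      have hle : G.dist (q.getVert 1) x ≤ n := by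
        have : G.dist (q.getVert 1) x ≤ q.tail.length := SimpleGraph.dist_le q.tail
        omega
      have hle' : G.dist x (q.getVert 1) ≤ n := by rwa [SimpleGraph.dist_comm]
      have hge : G.dist x (q.getVert 1) = n := by
        have := (dist_bounds G hconn x hadj).2
        omega
      exact Set.mem_biUnion (show q.getVert 1 ∈ {y : V | G.dist x y = n} from hge)
        (show y ∈ G.neighborSet (q.getVert 1) from hadj.symm)
    exact (ih.biUnion fun z _ => hlf z).subset hsub

variable (G : SimpleGraph V)

noncomputable def nbF (hlf : ∀ v : V, (G.neighborSet v).Finite) (v : V) : Finset V :=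
  (hlf v).toFinset

noncomputable def sphF (hconn : G.Connected) (hlf : ∀ v : V, (G.neighborSet v).Finite)
    (x : V) (k : ℕ) : Finset V :=
  (sphere_finite G hconn hlf x k).toFinset

noncomputable def noutF (hlf : ∀ v : V, (G.neighborSet v).Finite) (x v : V) : Finset V :=
  (nbF G hlf v).filter fun z => G.dist x z = G.dist x v + 1

noncomputable def nsameF (hlf : ∀ v : V, (G.neighborSet v).Finite) (x v : V) : Finset V :=
  (nbF G hlf v).filter fun z => G.dist x z = G.dist x v

noncomputable def ninF (hlf : ∀ v : V, (G.neighborSet v).Finite) (x v : V) : Finset V :=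
  (nbF G hlf v).filter fun z => G.dist x z = G.dist x v - 1

variable {G}
variable (hconn : G.Connected) (hlf : ∀ v : V, (G.neighborSet v).Finite) (x : V)

@[simp] lemma mem_nbF {v z : V} : z ∈ nbF G hlf v ↔ G.Adj v z := by
  simp [nbF]

@[simp] lemma mem_sphF {k : ℕ} {y : V} : y ∈ sphF G hconn hlf x k ↔ G.dist x y = k := by
  simp [sphF]

@[simp] lemma mem_noutF {v z : V} :
    z ∈ noutF G hlf x v ↔ G.Adj v z ∧ G.dist x z = G.dist x v + 1 := by
  simp [noutF]

@[simp] lemma mem_nsameF {v z : V} :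
    z ∈ nsameF G hlf x v ↔ G.Adj v z ∧ G.dist x z = G.dist x v := by
  simp [nsameF]

@[simp] lemma mem_ninF {v z : V} :
    z ∈ ninF G hlf x v ↔ G.Adj v z ∧ G.dist x z = G.dist x v - 1 := by
  simp [ninF]

include hconn in
lemma nb_split (v : V) (f : V → ℝ) :
    ∑ y ∈ nbF G hlf v, f y =
      (∑ y ∈ noutF G hlf x v, f y) + (∑ y ∈ nsameF G hlf x v, f y)
        + ∑ y ∈ ninF G hlf x v, f y := by
  rw [← Finset.sum_filter_add_sum_filter_not (nbF G hlf v)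
    (fun z => G.dist x z = G.dist x v + 1) f]
  have h2 := Finset.sum_filter_add_sum_filter_not
    ((nbF G hlf v).filter (fun z => ¬ (G.dist x z = G.dist x v + 1)))
    (fun z => G.dist x z = G.dist x v) f
  rw [← h2]
  have e1 : ((nbF G hlf v).filter (fun z => ¬ (G.dist x z = G.dist x v + 1))).filter
      (fun z => G.dist x z = G.dist x v) = nsameF G hlf x v := by
    rw [Finset.filter_filter]
    ext z
    simp only [Finset.mem_filter, mem_nbF, mem_nsameF]
    constructor
    · rintro ⟨ha, _, hb⟩; exact ⟨ha, hb⟩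
    · rintro ⟨ha, hb⟩; exact ⟨ha, by omega, hb⟩
  have e2 : ((nbF G hlf v).filter (fun z => ¬ (G.dist x z = G.dist x v + 1))).filter
      (fun z => ¬ (G.dist x z = G.dist x v)) = ninF G hlf x v := by
    rw [Finset.filter_filter]
    ext z
    simp only [Finset.mem_filter, mem_nbF, mem_ninF]
    constructor
    · rintro ⟨ha, h1, h2⟩
      have hb := dist_bounds G hconn x ha
      exact ⟨ha, by omega⟩
    · rintro ⟨ha, hb⟩
      refine ⟨ha, ?_, ?_⟩ <;>
      · rcases Nat.eq_zero_or_pos (G.dist x v) with h0 | h0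
        · have := dist_base G hconn x ha h0
          omega
        · omega
  rw [e1, e2]
  show (∑ y ∈ noutF G hlf x v, f y) + _ = _
  ring

variable (w : V → V → ℝ) (u : V → ℝ)

noncomputable def Pq (k : ℕ) : ℝ :=
  ∑ v ∈ sphF G hconn hlf x k, ∑ y ∈ noutF G hlf x v, w v y * (u y ^ 2 - u v ^ 2)

noncomputable def Rq (k : ℕ) : ℝ :=
  ∑ v ∈ sphF G hconn hlf x k, ∑ y ∈ noutF G hlf x v, w v y * (u y - u v) ^ 2

noncomputable def Rinq (k : ℕ) : ℝ :=
  ∑ v ∈ sphF G hconn hlf x k, ∑ y ∈ ninF G hlf x v, w v y * (u y - u v) ^ 2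

noncomputable def Pinq (k : ℕ) : ℝ :=
  ∑ v ∈ sphF G hconn hlf x k, ∑ y ∈ ninF G hlf x v, w v y * (u y ^ 2 - u v ^ 2)

noncomputable def Tq (k : ℕ) : ℝ :=
  ∑ v ∈ sphF G hconn hlf x k, ∑ y ∈ nsameF G hlf x v, w v y * (2 * u v * (u y - u v))

lemma swap_in_out (k : ℕ) (f : V → V → ℝ) :
    ∑ v ∈ sphF G hconn hlf x (k + 1), ∑ y ∈ ninF G hlf x v, f v y
      = ∑ y ∈ sphF G hconn hlf x k, ∑ v ∈ noutF G hlf x y, f v y := by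
  apply Finset.sum_comm'
  intro v y
  simp only [mem_sphF, mem_ninF, mem_noutF]
  constructor
  · rintro ⟨hv, hadj, hy⟩
    exact ⟨⟨hadj.symm, by omega⟩, by omega⟩
  · rintro ⟨⟨hadj, hv⟩, hy⟩
    exact ⟨by omega, hadj.symm, by omega⟩

lemma swap_same (k : ℕ) (f : V → V → ℝ) :
    ∑ v ∈ sphF G hconn hlf x k, ∑ y ∈ nsameF G hlf x v, f v y
      = ∑ y ∈ sphF G hconn hlf x k, ∑ v ∈ nsameF G hlf x y, f v y := by
  apply Finset.sum_comm'
  intro v y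
  simp only [mem_sphF, mem_nsameF]
  constructor
  · rintro ⟨hv, hadj, hy⟩
    exact ⟨⟨hadj.symm, by omega⟩, by omega⟩
  · rintro ⟨⟨hadj, hv⟩, hy⟩
    exact ⟨by omega, hadj.symm, by omega⟩

lemma harm_finset (hu : ∀ v : V, ∑ᶠ y ∈ G.neighborSet v, w v y * (u y - u v) = 0)
    (v : V) : ∑ y ∈ nbF G hlf v, w v y * (u y - u v) = 0 := by
  have h := hu v
  rwa [← (hlf v).coe_toFinset, finsum_mem_coe_finset] at h

lemma harm2 (hu : ∀ v : V, ∑ᶠ y ∈ G.neighborSet v, w v y * (u y - u v) = 0)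
    (v : V) : ∑ y ∈ nbF G hlf v, w v y * (2 * u v * (u y - u v)) = 0 := by
  have h := harm_finset hlf w u hu v
  have : ∑ y ∈ nbF G hlf v, w v y * (2 * u v * (u y - u v))
      = 2 * u v * ∑ y ∈ nbF G hlf v, w v y * (u y - u v) := by
    rw [Finset.mul_sum]
    exact Finset.sum_congr rfl fun y _ => by ring
  rw [this, h, mul_zero]

lemma key_identity (hu : ∀ v : V, ∑ᶠ y ∈ G.neighborSet v, w v y * (u y - u v) = 0)
    (k : ℕ) :
    (Pq hconn hlf x w u k - Rq hconn hlf x w u k) + Tq hconn hlf x w u k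
      + (Pinq hconn hlf x w u k - Rinq hconn hlf x w u k) = 0 := by
  have h0 : ∑ v ∈ sphF G hconn hlf x k,
      ∑ y ∈ nbF G hlf v, w v y * (2 * u v * (u y - u v)) = 0 :=
    Finset.sum_eq_zero fun v _ => harm2 hlf w u hu v
  have hsplit : ∑ v ∈ sphF G hconn hlf x k,
      ∑ y ∈ nbF G hlf v, w v y * (2 * u v * (u y - u v))
      = (∑ v ∈ sphF G hconn hlf x k,
          ∑ y ∈ noutF G hlf x v, w v y * (2 * u v * (u y - u v)))
        + (∑ v ∈ sphF G hconn hlf x k,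
          ∑ y ∈ nsameF G hlf x v, w v y * (2 * u v * (u y - u v)))
        + ∑ v ∈ sphF G hconn hlf x k,
          ∑ y ∈ ninF G hlf x v, w v y * (2 * u v * (u y - u v)) := by
    rw [← Finset.sum_add_distrib, ← Finset.sum_add_distrib]
    exact Finset.sum_congr rfl fun v _ => nb_split hconn hlf x v _
  have hout : ∑ v ∈ sphF G hconn hlf x k,
      ∑ y ∈ noutF G hlf x v, w v y * (2 * u v * (u y - u v))
      = Pq hconn hlf x w u k - Rq hconn hlf x w u k := by
    rw [Pq, Rq, ← Finset.sum_sub_distrib]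
    refine Finset.sum_congr rfl fun v _ => ?_
    rw [← Finset.sum_sub_distrib]
    exact Finset.sum_congr rfl fun y _ => by ring
  have hin : ∑ v ∈ sphF G hconn hlf x k,
      ∑ y ∈ ninF G hlf x v, w v y * (2 * u v * (u y - u v))
      = Pinq hconn hlf x w u k - Rinq hconn hlf x w u k := by
    rw [Pinq, Rinq, ← Finset.sum_sub_distrib]
    refine Finset.sum_congr rfl fun v _ => ?_
    rw [← Finset.sum_sub_distrib]
    exact Finset.sum_congr rfl fun y _ => by ring
  rw [hsplit, hout, hin] at h0
  rw [Tq]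
  exact h0

lemma Pin_succ (hsymm : ∀ a b : V, w a b = w b a) (k : ℕ) :
    Pinq hconn hlf x w u (k + 1) = - Pq hconn hlf x w u k := by
  rw [Pinq, swap_in_out hconn hlf x k (fun v y => w v y * (u y ^ 2 - u v ^ 2)), Pq]
  rw [← Finset.sum_neg_distrib]
  refine Finset.sum_congr rfl fun y _ => ?_
  rw [← Finset.sum_neg_distrib]
  refine Finset.sum_congr rfl fun v _ => ?_
  rw [hsymm y v]
  ring

lemma R_nonneg (hpos : ∀ a b : V, G.Adj a b → 0 < w a b) (k : ℕ) :
    0 ≤ Rq hconn hlf x w u k :=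
  Finset.sum_nonneg fun v _ => Finset.sum_nonneg fun y hy =>
    mul_nonneg (le_of_lt (hpos v y ((mem_noutF hlf x).mp hy).1)) (sq_nonneg _)

lemma Rin_nonneg (hpos : ∀ a b : V, G.Adj a b → 0 < w a b) (k : ℕ) :
    0 ≤ Rinq hconn hlf x w u k :=
  Finset.sum_nonneg fun v _ => Finset.sum_nonneg fun y hy =>
    mul_nonneg (le_of_lt (hpos v y ((mem_ninF hlf x).mp hy).1)) (sq_nonneg _)

lemma T_nonpos (hsymm : ∀ a b : V, w a b = w b a)
    (hpos : ∀ a b : V, G.Adj a b → 0 < w a b) (k : ℕ) :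
    Tq hconn hlf x w u k ≤ 0 := by
  have hswap : Tq hconn hlf x w u k
      = ∑ v ∈ sphF G hconn hlf x k, ∑ y ∈ nsameF G hlf x v,
          w v y * (2 * u y * (u v - u y)) := by
    rw [Tq, swap_same hconn hlf x k (fun v y => w v y * (2 * u v * (u y - u v)))]
    refine Finset.sum_congr rfl fun y _ => Finset.sum_congr rfl fun v _ => ?_
    rw [hsymm v y]
  have hdouble : Tq hconn hlf x w u k + Tq hconn hlf x w u k
      = ∑ v ∈ sphF G hconn hlf x k, ∑ y ∈ nsameF G hlf x v,
          (- (2 * w v y * (u y - u v) ^ 2)) := by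
    nth_rewrite 2 [hswap]
    rw [Tq, ← Finset.sum_add_distrib]
    refine Finset.sum_congr rfl fun v _ => ?_
    rw [← Finset.sum_add_distrib]
    exact Finset.sum_congr rfl fun y _ => by ring
  have hle : Tq hconn hlf x w u k + Tq hconn hlf x w u k ≤ 0 := by
    rw [hdouble]
    refine Finset.sum_nonpos fun v _ => Finset.sum_nonpos fun y hy => ?_
    have hw := hpos v y ((mem_nsameF hlf x).mp hy).1
    nlinarith [sq_nonneg (u y - u v)]
  linarith

include hconn in
lemma base_nin_empty {v : V} (hv : G.dist x v = 0) : ninF G hlf x v = ∅ := by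
  ext z
  simp only [mem_ninF, Finset.notMem_empty, iff_false, not_and]
  intro hadj
  have := dist_base G hconn x hadj hv
  omega

include hconn in
lemma base_nsame_empty {v : V} (hv : G.dist x v = 0) : nsameF G hlf x v = ∅ := by
  ext z
  simp only [mem_nsameF, Finset.notMem_empty, iff_false, not_and]
  intro hadj
  have := dist_base G hconn x hadj hv
  omega

lemma Pin_zero : Pinq hconn hlf x w u 0 = 0 := by
  rw [Pinq]
  refine Finset.sum_eq_zero fun v hv => ?_
  rw [base_nin_empty hconn hlf x ((mem_sphF hconn hlf x).mp hv), Finset.sum_empty]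

lemma Rin_zero : Rinq hconn hlf x w u 0 = 0 := by
  rw [Rinq]
  refine Finset.sum_eq_zero fun v hv => ?_
  rw [base_nin_empty hconn hlf x ((mem_sphF hconn hlf x).mp hv), Finset.sum_empty]

lemma T_zero : Tq hconn hlf x w u 0 = 0 := by
  rw [Tq]
  refine Finset.sum_eq_zero fun v hv => ?_
  rw [base_nsame_empty hconn hlf x ((mem_sphF hconn hlf x).mp hv), Finset.sum_empty]

lemma P_zero_nonneg (hpos : ∀ a b : V, G.Adj a b → 0 < w a b)
    (hu : ∀ v : V, ∑ᶠ y ∈ G.neighborSet v, w v y * (u y - u v) = 0) :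
    0 ≤ Pq hconn hlf x w u 0 := by
  have h := key_identity hconn hlf x w u hu 0
  rw [Pin_zero, Rin_zero, T_zero] at h
  have := R_nonneg hconn hlf x w u hpos 0
  linarith

lemma P_step (hsymm : ∀ a b : V, w a b = w b a)
    (hpos : ∀ a b : V, G.Adj a b → 0 < w a b)
    (hu : ∀ v : V, ∑ᶠ y ∈ G.neighborSet v, w v y * (u y - u v) = 0) (k : ℕ) :
    Pq hconn hlf x w u k ≤ Pq hconn hlf x w u (k + 1) := by
  have h := key_identity hconn hlf x w u hu (k + 1)
  rw [Pin_succ hconn hlf x w u hsymm k] at h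
  have h1 := R_nonneg hconn hlf x w u hpos (k + 1)
  have h2 := Rin_nonneg hconn hlf x w u hpos (k + 1)
  have h3 := T_nonpos hconn hlf x w u hsymm hpos (k + 1)
  linarith

lemma P_nonneg (hsymm : ∀ a b : V, w a b = w b a)
    (hpos : ∀ a b : V, G.Adj a b → 0 < w a b)
    (hu : ∀ v : V, ∑ᶠ y ∈ G.neighborSet v, w v y * (u y - u v) = 0) (k : ℕ) :
    0 ≤ Pq hconn hlf x w u k := by
  induction k with
  | zero => exact P_zero_nonneg hconn hlf x w u hpos hu
  | succ n ih => exact le_trans ih (P_step hconn hlf x w u hsymm hpos hu n)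

lemma dinw_eq (v : V) : dinw G w x v = ∑ z ∈ ninF G hlf x v, w v z := by
  rw [dinw]
  have hset : {z | G.Adj v z ∧ G.dist x z = G.dist x v - 1} = ↑(ninF G hlf x v) := by
    ext z
    simp [mem_ninF]
  rw [hset, finsum_mem_coe_finset]

lemma doutw_eq (v : V) : doutw G w x v = ∑ z ∈ noutF G hlf x v, w v z := by
  rw [doutw]
  have hset : {z | G.Adj v z ∧ G.dist x z = G.dist x v + 1} = ↑(noutF G hlf x v) := by
    ext z
    simp [mem_noutF]
  rw [hset, finsum_mem_coe_finset]

lemma almgren_eq (hsymm : ∀ a b : V, w a b = w b a) (k : ℕ) :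
    almgrenNw G w x u k = Pq hconn hlf x w u k := by
  rw [almgrenNw]
  have hs1 : {y : V | G.dist x y = k + 1} = ↑(sphF G hconn hlf x (k + 1)) := by
    ext y; simp [mem_sphF]
  have hs2 : {y : V | G.dist x y = k} = ↑(sphF G hconn hlf x k) := by
    ext y; simp [mem_sphF]
  rw [hs1, hs2, finsum_mem_coe_finset, finsum_mem_coe_finset]
  have h1 : ∑ y ∈ sphF G hconn hlf x (k + 1), dinw G w x y * u y ^ 2
      = ∑ y ∈ sphF G hconn hlf x (k + 1), ∑ z ∈ ninF G hlf x y, w y z * u y ^ 2 := by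
    refine Finset.sum_congr rfl fun y _ => ?_
    rw [dinw_eq hlf x w y, Finset.sum_mul]
  have h2 : ∑ y ∈ sphF G hconn hlf x k, doutw G w x y * u y ^ 2
      = ∑ v ∈ sphF G hconn hlf x k, ∑ z ∈ noutF G hlf x v, w v z * u v ^ 2 := by
    refine Finset.sum_congr rfl fun v _ => ?_
    rw [doutw_eq hlf x w v, Finset.sum_mul]
  rw [h1, h2, swap_in_out hconn hlf x k (fun a b => w a b * u a ^ 2), Pq,
    ← Finset.sum_sub_distrib]
  refine Finset.sum_congr rfl fun a _ => ?_
  rw [← Finset.sum_sub_distrib]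
  refine Finset.sum_congr rfl fun b _ => ?_
  rw [hsymm b a]
  ring

end AlmgrenAux

/-- on a connected, locally finite weighted graph with positive symmetric
edge weights, for a weighted-harmonic `u` the weighted Almgren quantity `N(k)` is
non-negative and satisfies `N(k+1) ≥ N(k)` for every `k ≥ 0`. -/
theorem almgren_weighted {V : Type*} (G : SimpleGraph V) (hconn : G.Connected)
    (hlf : ∀ v : V, (G.neighborSet v).Finite) (w : V → V → ℝ)
    (hsymm : ∀ a b : V, w a b = w b a) (hpos : ∀ a b : V, G.Adj a b → 0 < w a b)
    (x : V) (u : V → ℝ)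
    (hu : ∀ v : V, ∑ᶠ y ∈ G.neighborSet v, w v y * (u y - u v) = 0) (k : ℕ) :
    0 ≤ almgrenNw G w x u k ∧ almgrenNw G w x u k ≤ almgrenNw G w x u (k + 1) := by
  rw [AlmgrenAux.almgren_eq hconn hlf x w u hsymm k,
    AlmgrenAux.almgren_eq hconn hlf x w u hsymm (k + 1)]
  exact ⟨AlmgrenAux.P_nonneg hconn hlf x w u hsymm hpos hu k,
    AlmgrenAux.P_step hconn hlf x w u hsymm hpos hu k⟩
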